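/- Let X be the n×n matrix whose first row is (x₁, x₂, …, xₙ) and whose i-th row (for i ≥ 2) is obtained from the first row by swapping entries x₁ and xᵢ (i.e., row i is (xᵢ, x₂, …, x_{i-1}, x₁, x_{i+1}, …, xₙ)). Then the multiset of eigenvalues of X is {x₁ + x₂ + ⋯ + xₙ, x₁ − x₂, x₁ − x₃, …, x₁ − xₙ}. -/

import Mathlib

open Matrix Polynomial

namespace Stmt0Aux

variable {n : ℕ}

/-- row-operation matrix: subtract row `i0` from every other row. -/
def Amat (i0 : Fin n) : Matrix (Fin n) (Fin n) ℂ :=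
  Matrix.of fun i k => if i = k then 1 else if k = i0 then -1 else 0

/-- column-operation matrix: add every column to column `i0`. -/
def Bmat (i0 : Fin n) : Matrix (Fin n) (Fin n) ℂ :=
  Matrix.of fun l j => if j = i0 then 1 else if l = j then 1 else 0

lemma mulB (i0 : Fin n) (M : Matrix (Fin n) (Fin n) ℂ) (i j : Fin n) :
    (M * Bmat i0) i j = if j = i0 then ∑ l, M i l else M i j := by
  rw [Matrix.mul_apply]
  by_cases hj : j = i0
  · simp [Bmat, hj]
  · simp only [Bmat, Matrix.of_apply, if_neg hj, mul_ite, mul_one, mul_zero]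
    rw [Finset.sum_ite_eq' Finset.univ j (M i)]
    simp [hj]

lemma Amul (i0 : Fin n) (M : Matrix (Fin n) (Fin n) ℂ) (i j : Fin n) :
    (Amat i0 * M) i j = M i j - (if i = i0 then 0 else M i0 j) := by
  rw [Matrix.mul_apply]
  by_cases hi : i = i0
  · have hA : ∀ k, Amat i0 i k = if k = i0 then 1 else 0 := by
      intro k
      by_cases hk : k = i0
      · simp [Amat, hk, hi]
      · have hk' : ¬ i0 = k := fun h => hk h.symm
        simp [Amat, hk, hi, hk']
    simp only [hA, ite_mul, one_mul, zero_mul]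
    rw [Finset.sum_ite_eq' Finset.univ i0 (fun k => M k j)]
    simp [hi]
  · have hA : ∀ k, Amat i0 i k =
        (if k = i then (1 : ℂ) else 0) - (if k = i0 then 1 else 0) := by
      intro k
      by_cases h1 : k = i <;> by_cases h2 : k = i0 <;>
        simp_all [Amat, eq_comm]
    simp only [hA, sub_mul, one_mul, zero_mul, ite_mul]
    rw [Finset.sum_sub_distrib, Finset.sum_ite_eq' Finset.univ i (fun k => M k j),
      Finset.sum_ite_eq' Finset.univ i0 (fun k => M k j)]
    simp [hi]

lemma rowsumA (i0 : Fin n) (i : Fin n) :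
    ∑ l, Amat i0 i l = if i = i0 then 1 else 0 := by
  by_cases hi : i = i0
  · have hA : ∀ k, Amat i0 i k = if k = i0 then 1 else 0 := by
      intro k
      by_cases hk : k = i0
      · simp [Amat, hk, hi]
      · have hk' : ¬ i0 = k := fun h => hk h.symm
        simp [Amat, hk, hi, hk']
    simp only [hA]
    rw [Finset.sum_ite_eq' Finset.univ i0 (fun _ => (1 : ℂ))]
    simp [hi]
  · have hA : ∀ k, Amat i0 i k =
        (if k = i then (1 : ℂ) else 0) - (if k = i0 then 1 else 0) := by
      intro k
      by_cases h1 : k = i <;> by_cases h2 : k = i0 <;>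
        simp_all [Amat, eq_comm]
    simp only [hA]
    rw [Finset.sum_sub_distrib, Finset.sum_ite_eq' Finset.univ i (fun _ => (1 : ℂ)),
      Finset.sum_ite_eq' Finset.univ i0 (fun _ => (1 : ℂ))]
    simp [hi]

lemma AB (i0 : Fin n) : Amat i0 * Bmat i0 = 1 := by
  ext i j
  rw [mulB, rowsumA, Matrix.one_apply]
  by_cases hj : j = i0
  · rw [if_pos hj, hj]
  · rw [if_neg hj]
    simp only [Amat, Matrix.of_apply]
    by_cases hij : i = j <;> simp [hij, hj]

end Stmt0Aux

open Stmt0Aux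

/-- the eigenvalue multiset of the matrix whose i-th row (i ≥ 2) is the
first row (x₁,…,xₙ) with entries x₁ and xᵢ swapped is {∑ xᵢ, x₁−x₂, …, x₁−xₙ}. -/
theorem stmt0 (n : ℕ) (hn : 0 < n) (x : Fin n → ℂ)
    (X : Matrix (Fin n) (Fin n) ℂ)
    (hX : ∀ i j, X i j =
      if i ≠ ⟨0, hn⟩ ∧ j = i then x ⟨0, hn⟩
      else if i ≠ ⟨0, hn⟩ ∧ j = ⟨0, hn⟩ then x i
      else x j) :
    X.charpoly.roots =
      (∑ i, x i) ::ₘ ((Finset.univ.erase (⟨0, hn⟩ : Fin n)).val.map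
        (fun i => x ⟨0, hn⟩ - x i)) := by
  set i0 : Fin n := ⟨0, hn⟩ with hi0
  set A := Amat i0 with hA
  set B := Bmat i0 with hB
  have hAB : A * B = 1 := AB i0
  set T := A * X * B with hTdef
  -- entries of X
  have hX0 : ∀ j, X i0 j = x j := by
    intro j
    rw [hX]
    simp
  have hXrow : ∀ i j, i ≠ i0 → X i j =
      if j = i then x i0 else if j = i0 then x i else x j := by
    intro i j hi
    rw [hX]
    by_cases h1 : j = i <;> by_cases h2 : j = i0 <;> simp_all
  -- entries of T
  have hT : ∀ i j, T i j =
      if i = i0 then (if j = i0 then ∑ k, x k else x j)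
      else if j = i then x i0 - x i else 0 := by
    intro i j
    rw [hTdef, mulB]
    by_cases hi : i = i0
    · subst hi
      by_cases hj : j = i0
      · simp only [if_pos hj, if_pos rfl]
        rw [Finset.sum_congr rfl fun l _ => Amul i0 X i0 l]
        simp [hX0]
      · simp only [if_neg hj, if_pos rfl]
        rw [Amul]
        simp [hX0]
    · by_cases hj : j = i0
      · subst hj
        have hji : ¬ (i0 = i) := fun h => hi h.symm
        simp only [if_pos rfl, if_neg hi, if_neg hji]
        rw [Finset.sum_congr rfl fun l _ => Amul i0 X i l]
        have hterm : ∀ l, X i l - (if i = i0 then 0 else X i0 l) =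
            (if l = i then x i0 - x i else 0) - (if l = i0 then x i0 - x i else 0) := by
          intro l
          rw [if_neg hi, hXrow i l hi, hX0]
          by_cases h1 : l = i <;> by_cases h2 : l = i0 <;> simp_all <;> ring
        rw [Finset.sum_congr rfl fun l _ => hterm l, Finset.sum_sub_distrib,
          Finset.sum_ite_eq' Finset.univ i (fun _ => x i0 - x i),
          Finset.sum_ite_eq' Finset.univ i0 (fun _ => x i0 - x i)]
        simp
      · simp only [if_neg hj, if_neg hi]
        rw [Amul, if_neg hi, hXrow i j hi, hX0]
        by_cases h1 : j = i <;> simp_all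
  -- X and T have the same characteristic polynomial
  have hAB' : (A.map (C : ℂ →+* ℂ[X])) * (B.map (C : ℂ →+* ℂ[X])) = 1 := by
    rw [← Matrix.map_mul, hAB]
    exact Matrix.map_one _ (map_zero _) (map_one _)
  have hchar : X.charpoly = T.charpoly := by
    have hcm : charmatrix T = (A.map (C : ℂ →+* ℂ[X])) * charmatrix X
        * (B.map (C : ℂ →+* ℂ[X])) := by
      have hscalar : (A.map (C : ℂ →+* ℂ[X])) * Matrix.scalar (Fin n) (Polynomial.X : ℂ[X])
          * (B.map (C : ℂ →+* ℂ[X])) = Matrix.scalar (Fin n) (Polynomial.X : ℂ[X]) := by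
        rw [← (Matrix.scalar_commute (Polynomial.X : ℂ[X]) (fun r' => Commute.all _ _)
          (A.map (C : ℂ →+* ℂ[X]))).eq, mul_assoc, hAB', mul_one]
      calc charmatrix T
          = Matrix.scalar (Fin n) (Polynomial.X : ℂ[X]) - (A * X * B).map C := by
            rw [charmatrix]; rfl
        _ = (A.map (C : ℂ →+* ℂ[X])) * Matrix.scalar (Fin n) (Polynomial.X : ℂ[X])
              * (B.map (C : ℂ →+* ℂ[X]))
            - (A.map (C : ℂ →+* ℂ[X])) * (X.map (C : ℂ →+* ℂ[X]))
              * (B.map (C : ℂ →+* ℂ[X])) := by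
            rw [hscalar, Matrix.map_mul, Matrix.map_mul]
        _ = (A.map (C : ℂ →+* ℂ[X])) * charmatrix X * (B.map (C : ℂ →+* ℂ[X])) := by
            rw [charmatrix]
            simp only [RingHom.mapMatrix_apply]
            rw [Matrix.mul_sub, Matrix.sub_mul]
    have hdet1 : (A.map (C : ℂ →+* ℂ[X])).det * (B.map (C : ℂ →+* ℂ[X])).det = 1 := by
      rw [← Matrix.det_mul, hAB', Matrix.det_one]
    rw [Matrix.charpoly, Matrix.charpoly, hcm, Matrix.det_mul, Matrix.det_mul]
    linear_combination (-(charmatrix X).det) * hdet1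
  -- T is upper triangular
  have htri : T.BlockTriangular id := by
    intro i j hij
    have hi : i ≠ i0 := by
      rintro rfl
      exact absurd hij (by simp [hi0, Fin.lt_def, id])
    rw [hT, if_neg hi, if_neg (show ¬ j = i from ne_of_lt hij)]
  rw [hchar, Matrix.charpoly_of_upperTriangular T htri]
  -- compute roots
  set d : Fin n → ℂ := fun i => if i = i0 then ∑ k, x k else x i0 - x i with hd
  have hdiag : ∀ i, T i i = d i := by
    intro i
    rw [hT, hd]
    by_cases hi : i = i0 <;> simp [hi]
  have hprod : ∏ i, ((Polynomial.X : ℂ[X]) - C (T i i))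
      = ((Finset.univ.val.map d).map fun a => (Polynomial.X : ℂ[X]) - C a).prod := by
    rw [Multiset.map_map]
    rw [Finset.prod_congr rfl fun i _ => by rw [hdiag i]]
    rfl
  rw [hprod, roots_multiset_prod_X_sub_C]
  have hsplit : (Finset.univ : Finset (Fin n)).val
      = i0 ::ₘ (Finset.univ.erase i0).val := by
    conv_lhs => rw [← Finset.insert_erase (Finset.mem_univ i0)]
    rw [Finset.insert_val_of_notMem (Finset.notMem_erase _ _)]
  have hmap2 : Multiset.map d (Finset.univ.erase i0).val
      = Multiset.map (fun i => x i0 - x i) (Finset.univ.erase i0).val := by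
    apply Multiset.map_congr rfl
    intro i hi
    have hne : i ≠ i0 := (Finset.mem_erase.mp (Finset.mem_val.mp hi)).1
    simp [hd, hne]
  rw [hsplit, Multiset.map_cons, hmap2]
  congr 1
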